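/- arXiv:2001.00397 — 3 statements merged into one kernel-verified Lean document; each statement's English description precedes it below -/
import Mathlib

section
/- Let y1, y2 > 0 with h = sqrt(y1 + y2 - y1*y2) > 0 and y2 > 1. Then the contour integral (h^2 i / (4π(y1+y2))) ∮_{|ξ|=1} (ξ^2-1)^2 / (ξ^2 (y2 - hξ)(ξ - h/y2)) dξ equals h^2 / ((y1+y2) y2). -/
open Complex Metric Set

lemma circleInt_add {f g : ℂ → ℂ} {c : ℂ} {R : ℝ} (hf : CircleIntegrable f c R)
    (hg : CircleIntegrable g c R) :
    (∮ z in C(c, R), (f z + g z)) = (∮ z in C(c, R), f z) + ∮ z in C(c, R), g z := by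
  simp only [circleIntegral, smul_add, intervalIntegral.integral_add hf.out hg.out]

theorem stmt2 (y1 y2 h : ℝ) (hy1 : 0 < y1) (hy2 : 1 < y2)
    (hpos : 0 < y1 + y2 - y1 * y2) (hh : h = Real.sqrt (y1 + y2 - y1 * y2)) :
    ((h : ℂ) ^ 2 * Complex.I / (4 * (Real.pi : ℂ) * ((y1 : ℂ) + (y2 : ℂ)))) *
      (∮ ξ in C((0 : ℂ), 1), (ξ ^ 2 - 1) ^ 2 /
        (ξ ^ 2 * ((y2 : ℂ) - (h : ℂ) * ξ) * (ξ - (h : ℂ) / (y2 : ℂ))))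
    = ((h ^ 2 / ((y1 + y2) * y2) : ℝ) : ℂ) := by
  have hπ : (0:ℝ) < Real.pi := Real.pi_pos
  have hh0 : 0 < h := hh ▸ Real.sqrt_pos.2 hpos
  have hsq : h ^ 2 = y1 + y2 - y1 * y2 := by
    rw [hh]; exact Real.sq_sqrt hpos.le
  have hhy : h < y2 := by nlinarith
  -- complex versions
  set H : ℂ := (h : ℂ) with hH
  set Y : ℂ := (y2 : ℂ) with hY
  have hHne : H ≠ 0 := by
    simp only [hH, ne_eq, ofReal_eq_zero]; exact hh0.ne'
  have hYne : Y ≠ 0 := by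
    simp only [hY, ne_eq, ofReal_eq_zero]; positivity
  set c1 : ℂ := H / Y with hc1
  set c2 : ℂ := Y / H with hc2
  have habs1 : ‖c1‖ < 1 := by
    simp only [hc1, hH, hY, norm_div, Complex.norm_real, Real.norm_eq_abs, abs_of_pos hh0,
      abs_of_pos (by positivity : (0:ℝ) < y2)]
    rw [div_lt_one (by positivity)]; exact hhy
  have habs2 : 1 < ‖c2‖ := by
    simp only [hc2, hH, hY, norm_div, Complex.norm_real, Real.norm_eq_abs, abs_of_pos hh0,
      abs_of_pos (by positivity : (0:ℝ) < y2)]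
    rw [lt_div_iff₀ hh0]; simpa using hhy
  -- coefficients of the partial fraction decomposition
  set E : ℂ := -1 / H with hE
  set A : ℂ := -(H ^ 2 + Y ^ 2) / (Y * H ^ 2) with hA
  set B : ℂ := -1 / H with hB
  set Cc : ℂ := (Y ^ 2 - H ^ 2) / (Y * H ^ 2) with hCc
  set D : ℂ := -(Y ^ 2 - H ^ 2) / (H ^ 2 * Y) with hD
  -- nonvanishing of denominators on the unit circle
  have hcirc : ∀ ξ : ℂ, ξ ∈ sphere (0:ℂ) 1 →
      ξ ≠ 0 ∧ ξ - c1 ≠ 0 ∧ ξ - c2 ≠ 0 := by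
    intro ξ hξ
    have habsξ : ‖ξ‖ = 1 := by
      simpa [Complex.dist_eq] using hξ
    refine ⟨?_, ?_, ?_⟩
    · intro h0; rw [h0] at habsξ; simp at habsξ
    · intro h0
      have : ξ = c1 := by linear_combination h0
      rw [this] at habsξ; exact absurd habsξ habs1.ne
    · intro h0
      have : ξ = c2 := by linear_combination h0
      rw [this] at habsξ; exact absurd habsξ habs2.ne'
  -- the partial fraction identity on the circle
  have hcongr : (∮ ξ in C((0 : ℂ), 1), (ξ ^ 2 - 1) ^ 2 /
        (ξ ^ 2 * (Y - H * ξ) * (ξ - c1)))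
      = ∮ ξ in C((0 : ℂ), 1),
        (E + (A * (ξ - 0)⁻¹ + (B * ((ξ - 0) ^ (-2 : ℤ)) +
          (Cc * (ξ - c1)⁻¹ + D * (ξ - c2)⁻¹)))) := by
    refine circleIntegral.integral_congr zero_le_one fun ξ hξ => ?_
    obtain ⟨h0, h1, h2⟩ := hcirc ξ hξ
    have hm1 : ξ * Y - H ≠ 0 := by
      intro hz; apply h1; rw [hc1, sub_eq_zero, eq_div_iff hYne]
      linear_combination hz
    have hm2 : ξ * H - Y ≠ 0 := by
      intro hz; apply h2; rw [hc2, sub_eq_zero, eq_div_iff hHne]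
      linear_combination hz
    have h3 : Y - H * ξ ≠ 0 := by
      intro hz; apply hm2; linear_combination -hz
    have hz2 : (ξ - 0) ^ (-2 : ℤ) = (ξ ^ 2)⁻¹ := by
      rw [sub_zero, zpow_neg, zpow_two, sq]
    have e1 : ξ - c1 = (ξ * Y - H) / Y := by rw [hc1]; field_simp
    have e2 : ξ - c2 = (ξ * H - Y) / H := by rw [hc2]; field_simp
    have n1 : H ≠ 0 := hHne
    have n2 : Y * H ^ 2 * ξ ≠ 0 := mul_ne_zero (mul_ne_zero hYne (pow_ne_zero 2 hHne)) h0
    have n3 : H * ξ ^ 2 ≠ 0 := mul_ne_zero hHne (pow_ne_zero 2 h0)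
    have n4 : H ^ 2 * (ξ * Y - H) ≠ 0 := mul_ne_zero (pow_ne_zero 2 hHne) hm1
    have n5 : H * Y * (ξ * H - Y) ≠ 0 := mul_ne_zero (mul_ne_zero hHne hYne) hm2
    have t2 : A * ξ⁻¹ = -(H ^ 2 + Y ^ 2) / (Y * H ^ 2 * ξ) := by
      rw [hA]; field_simp
    have t3 : B * (ξ ^ 2)⁻¹ = -1 / (H * ξ ^ 2) := by
      rw [hB]; field_simp; try ring
    have t4 : Cc * ((ξ * Y - H) / Y)⁻¹ = (Y ^ 2 - H ^ 2) / (H ^ 2 * (ξ * Y - H)) := by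
      rw [hCc, inv_div]; field_simp; try ring
    have t5 : D * ((ξ * H - Y) / H)⁻¹ = -(Y ^ 2 - H ^ 2) / (H * Y * (ξ * H - Y)) := by
      rw [hD, inv_div]; field_simp; try ring
    rw [hz2, sub_zero, e1, e2, t2, t3, t4, t5, hE, hB,
      div_add_div _ _ n4 n5, div_add_div _ _ n3 (mul_ne_zero n4 n5),
      div_add_div _ _ n2 (mul_ne_zero n3 (mul_ne_zero n4 n5)),
      div_add_div _ _ n1 (mul_ne_zero n2 (mul_ne_zero n3 (mul_ne_zero n4 n5))),
      show ξ ^ 2 * (Y - H * ξ) * ((ξ * Y - H) / Y)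
        = ξ ^ 2 * (Y - H * ξ) * (ξ * Y - H) / Y from by ring,
      div_div_eq_mul_div,
      div_eq_div_iff (mul_ne_zero (mul_ne_zero (pow_ne_zero 2 h0) h3) hm1)
        (mul_ne_zero n1 (mul_ne_zero n2 (mul_ne_zero n3 (mul_ne_zero n4 n5))))]
    ring
  -- integrability of each piece
  have hint1 : CircleIntegrable (fun ξ : ℂ => A * (ξ - 0)⁻¹) 0 1 := by
    refine ContinuousOn.circleIntegrable zero_le_one ?_
    refine continuousOn_const.mul (ContinuousOn.inv₀ (by fun_prop) fun ξ hξ => ?_)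
    exact (hcirc ξ hξ).1 ∘ (by simp_all)
  have hint2 : CircleIntegrable (fun ξ : ℂ => B * ((ξ - 0) ^ (-2 : ℤ))) 0 1 := by
    refine ContinuousOn.circleIntegrable zero_le_one ?_
    refine continuousOn_const.mul (ContinuousOn.zpow₀ (by fun_prop) _ fun ξ hξ => ?_)
    exact Or.inl (by simpa using (hcirc ξ hξ).1)
  have hint3 : CircleIntegrable (fun ξ : ℂ => Cc * (ξ - c1)⁻¹) 0 1 := by
    refine ContinuousOn.circleIntegrable zero_le_one ?_
    exact continuousOn_const.mul (ContinuousOn.inv₀ (by fun_prop) fun ξ hξ => (hcirc ξ hξ).2.1)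
  have hint4 : CircleIntegrable (fun ξ : ℂ => D * (ξ - c2)⁻¹) 0 1 := by
    refine ContinuousOn.circleIntegrable zero_le_one ?_
    exact continuousOn_const.mul (ContinuousOn.inv₀ (by fun_prop) fun ξ hξ => (hcirc ξ hξ).2.2)
  have hintE : CircleIntegrable (fun _ : ℂ => E) 0 1 := circleIntegrable_const E 0 1
  have hint34 : CircleIntegrable (fun ξ : ℂ => Cc * (ξ - c1)⁻¹ + D * (ξ - c2)⁻¹) 0 1 :=
    hint3.add hint4
  have hint234 : CircleIntegrable (fun ξ : ℂ => B * ((ξ - 0) ^ (-2 : ℤ)) +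
      (Cc * (ξ - c1)⁻¹ + D * (ξ - c2)⁻¹)) 0 1 := hint2.add hint34
  have hint1234 : CircleIntegrable (fun ξ : ℂ => A * (ξ - 0)⁻¹ +
      (B * ((ξ - 0) ^ (-2 : ℤ)) + (Cc * (ξ - c1)⁻¹ + D * (ξ - c2)⁻¹))) 0 1 :=
    hint1.add hint234
  -- values of the basic integrals
  have IE : (∮ _ξ in C((0:ℂ), 1), E) = 0 := by
    refine circleIntegral_eq_zero_of_differentiable_on_off_countable zero_le_one
      Set.countable_empty continuousOn_const fun z _ => differentiableAt_const E
  have I1 : (∮ ξ in C((0:ℂ), 1), (ξ - 0)⁻¹) = 2 * Real.pi * Complex.I :=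
    circleIntegral.integral_sub_inv_of_mem_ball (by simp)
  have I2 : (∮ ξ in C((0:ℂ), 1), (ξ - 0) ^ (-2 : ℤ)) = 0 :=
    circleIntegral.integral_sub_zpow_of_ne (by decide) 0 0 1
  have I3 : (∮ ξ in C((0:ℂ), 1), (ξ - c1)⁻¹) = 2 * Real.pi * Complex.I :=
    circleIntegral.integral_sub_inv_of_mem_ball (by
      simpa [mem_ball, Complex.dist_eq] using habs1)
  have I4 : (∮ ξ in C((0:ℂ), 1), (ξ - c2)⁻¹) = 0 := by
    refine circleIntegral_eq_zero_of_differentiable_on_off_countable zero_le_one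
      Set.countable_empty ?_ fun z hz => ?_
    · refine ContinuousOn.inv₀ (by fun_prop) fun ξ hξ => ?_
      intro h0
      have : ξ = c2 := by linear_combination h0
      have hξ' : ‖ξ‖ ≤ 1 := by simpa [Complex.dist_eq] using hξ
      rw [this] at hξ'; exact absurd hξ' (not_le.2 habs2)
    · refine DifferentiableAt.inv (by fun_prop) ?_
      intro h0
      have : z = c2 := by linear_combination h0
      have hz' : ‖z‖ < 1 := by
        simpa [Complex.dist_eq] using hz.1
      rw [this] at hz'; exact absurd hz' (not_lt.2 habs2.le)
  -- put it together
  have hsplit : (∮ ξ in C((0 : ℂ), 1),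
        (E + (A * (ξ - 0)⁻¹ + (B * ((ξ - 0) ^ (-2 : ℤ)) +
          (Cc * (ξ - c1)⁻¹ + D * (ξ - c2)⁻¹)))))
      = (A + Cc) * (2 * Real.pi * Complex.I) := by
    rw [circleInt_add hintE hint1234,
      circleInt_add hint1 hint234,
      circleInt_add hint2 hint34,
      circleInt_add hint3 hint4,
      circleIntegral.integral_const_mul, circleIntegral.integral_const_mul,
      circleIntegral.integral_const_mul, circleIntegral.integral_const_mul,
      IE, I1, I2, I3, I4]
    ring
  have hmain : (∮ ξ in C((0 : ℂ), 1), (ξ ^ 2 - 1) ^ 2 /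
        (ξ ^ 2 * (Y - H * ξ) * (ξ - c1)))
      = (A + Cc) * (2 * Real.pi * Complex.I) := by
    rw [hcongr, hsplit]
  have hAC : A + Cc = -2 / Y := by
    rw [hA, hCc]
    field_simp
    ring
  rw [hmain, hAC]
  have hy12 : (y1:ℂ) + (y2:ℂ) ≠ 0 := by
    have : (0:ℝ) < y1 + y2 := by positivity
    intro h0
    have := congrArg Complex.re h0
    simp at this
    linarith
  have hπne : (Real.pi : ℂ) ≠ 0 := by
    simp only [ne_eq, ofReal_eq_zero]; exact hπ.ne'
  have : ((h ^ 2 / ((y1 + y2) * y2) : ℝ) : ℂ) = H ^ 2 / (((y1:ℂ) + (y2:ℂ)) * Y) := by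
    push_cast [hH, hY]
    ring
  rw [this]
  rw [hY]
  field_simp
  ring_nf
  rw [Complex.I_sq]
  ring
end

section
/- Let y1, y2 > 0 with y2 ≠ 1 and set h = sqrt(y1 + y2 - y1 y2) > 0. For ξ on the unit circle, if m3 = -(1 + h/ξ)/(1 - y2) and z = -m3(m3 + 1 - y1)/((1 - y2) m3 + 1), then with α = y1/y2 one has z/(α + z) = y2 |1 + hξ|^2 / |y2 + hξ|^2 and 1 - z/(α + z) = y1 (y2 - 1)^2 / |y2 + hξ|^2. -/
theorem stmt5 (y1 y2 h α : ℝ) (ξ m3 z : ℂ) (hy1 : 0 < y1) (hy2 : 0 < y2)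
    (hy2ne : y2 ≠ 1) (hpos : 0 < y1 + y2 - y1 * y2)
    (hh : h = Real.sqrt (y1 + y2 - y1 * y2)) (hα : α = y1 / y2)
    (hξ : ‖ξ‖ = 1) (hξ0 : ξ ≠ 0)
    (hm3 : m3 = -(1 + (h : ℂ) / ξ) / (1 - (y2 : ℂ)))
    (hz : z = -m3 * (m3 + 1 - (y1 : ℂ)) / ((1 - (y2 : ℂ)) * m3 + 1))
    (hden1 : (1 - (y2 : ℂ)) * m3 + 1 ≠ 0)
    (hden2 : (α : ℂ) + z ≠ 0)
    (hden3 : (y2 : ℂ) + (h : ℂ) * ξ ≠ 0) :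
    z / ((α : ℂ) + z)
        = ((y2 * ‖1 + (h : ℂ) * ξ‖ ^ 2 / ‖(y2 : ℂ) + (h : ℂ) * ξ‖ ^ 2 : ℝ) : ℂ) ∧
    1 - z / ((α : ℂ) + z)
        = ((y1 * (y2 - 1) ^ 2 / ‖(y2 : ℂ) + (h : ℂ) * ξ‖ ^ 2 : ℝ) : ℂ) := by
  have hhp : 0 < h := hh ▸ Real.sqrt_pos.2 hpos
  have hH : (h : ℂ) ≠ 0 := by exact_mod_cast hhp.ne'
  have hy2' : (y2 : ℂ) ≠ 0 := by exact_mod_cast hy2.ne'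
  have hne2 : (1 : ℂ) - (y2 : ℂ) ≠ 0 := by
    rw [sub_ne_zero]
    exact_mod_cast fun hc => hy2ne (by exact_mod_cast hc.symm)
  have hH2 : (h : ℂ) ^ 2 = (y1 : ℂ) + y2 - y1 * y2 := by
    have : h ^ 2 = y1 + y2 - y1 * y2 := by
      rw [hh, sq, Real.mul_self_sqrt hpos.le]
    exact_mod_cast this
  have hns : Complex.normSq ξ = 1 := by
    rw [← Complex.sq_norm]
    simp [hξ]
  have hconj : (starRingEnd ℂ) ξ = ξ⁻¹ := by
    rw [Complex.inv_def, hns]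
    simp
  have hden3' : (y2 : ℂ) * ξ + h ≠ 0 := by
    have h0 : (starRingEnd ℂ) ((y2 : ℂ) + (h : ℂ) * ξ) ≠ 0 := by
      simp only [ne_eq, map_eq_zero]
      exact hden3
    rw [map_add, map_mul, hconj] at h0
    simp only [Complex.conj_ofReal] at h0
    intro hc
    apply h0
    have : (y2 : ℂ) + (h : ℂ) * ξ⁻¹ = ((y2 : ℂ) * ξ + h) / ξ := by
      field_simp
    rw [this, hc, zero_div]
  have hm3num : (1 - (y2 : ℂ)) * m3 + 1 = -((h : ℂ) / ξ) := by
    rw [hm3]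
    field_simp
    ring
  have hzval : z = (ξ + h) * (1 + h * ξ) / (ξ * (1 - y2) ^ 2) := by
    rw [hz, hm3num, hm3]
    field_simp
    linear_combination (-(ξ * (ξ + h))) * hH2
  have hsum : (y1:ℂ)/y2 + (ξ + h) * (1 + h * ξ) / (ξ * (1 - y2) ^ 2)
      = ((y2:ℂ) + h * ξ) * ((y2:ℂ) * ξ + h) / ((y2:ℂ) * ξ * (1 - y2) ^ 2) := by
    field_simp
    linear_combination (-ξ * ((1:ℂ) - y2)) * hH2
  have key : z / ((α : ℂ) + z)
      = (y2 : ℂ) * ((1 + h * ξ) * (ξ + h)) / (((y2 : ℂ) + h * ξ) * ((y2 : ℂ) * ξ + h)) := by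
    rw [hzval, hα]
    push_cast
    rw [hsum]
    rw [div_div_div_eq]
    rw [div_eq_div_iff (by
        exact mul_ne_zero (mul_ne_zero hξ0 (pow_ne_zero 2 hne2))
          (mul_ne_zero hden3 hden3')) (mul_ne_zero hden3 hden3')]
    ring
  have hn1 : (((‖1 + (h : ℂ) * ξ‖ : ℝ)) : ℂ) ^ 2 = (1 + h * ξ) * (ξ + h) / ξ := by
    have := Complex.mul_conj' (1 + (h : ℂ) * ξ)
    rw [map_add, map_mul, hconj, map_one, Complex.conj_ofReal] at this
    push_cast at this ⊢
    rw [← this]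
    field_simp
  have hn2 : (((‖(y2 : ℂ) + (h : ℂ) * ξ‖ : ℝ)) : ℂ) ^ 2
      = ((y2 : ℂ) + h * ξ) * ((y2 : ℂ) * ξ + h) / ξ := by
    have := Complex.mul_conj' ((y2 : ℂ) + (h : ℂ) * ξ)
    rw [map_add, map_mul, hconj, Complex.conj_ofReal, Complex.conj_ofReal] at this
    push_cast at this ⊢
    rw [← this]
    field_simp
  have hnorm2ne : (((‖(y2 : ℂ) + (h : ℂ) * ξ‖ : ℝ)) : ℂ) ^ 2 ≠ 0 := by
    rw [hn2]
    exact div_ne_zero (mul_ne_zero hden3 hden3') hξ0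
  constructor
  · rw [key]
    push_cast
    rw [hn1, hn2]
    field_simp
  · rw [key]
    push_cast
    rw [hn2]
    field_simp
    linear_combination (ξ * ((1:ℂ) - y2)) * hH2
end

section
/- Let y1 > 1, y2 > 1, h = sqrt(y1+y2-y1y2) > 0. Then lim_{r↓1} (1/(4πi)) ∮_{|ξ|=1} [y1 y2 ((1+hrξ)(1+h/(rξ)) - (y2-1)^2)^2 / ((y2+hrξ)(y2+h/(rξ)))^2] · (1/(ξ-1/r) + 1/(ξ+1/r) - 2/(ξ + h/(y2 r))) dξ = y1 y2 h^2/(y1+y2)^2. -/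
set_option maxHeartbeats 2000000

open Filter Metric Set

private lemma add_ne_zero_of_norm_lt' {a w : ℂ} (h : ‖w‖ < ‖a‖) : a + w ≠ 0 := by
  intro e
  have : a = -w := by linear_combination e
  rw [this, norm_neg] at h; exact lt_irrefl _ h

private lemma circleInt_helper1 (Cst w : ℂ) (hw : ‖w‖ ≠ 1) :
    CircleIntegrable (fun z => Cst * (z - w)⁻¹) 0 1 := by
  apply ContinuousOn.circleIntegrable zero_le_one
  apply continuousOn_const.mul
  apply ContinuousOn.inv₀ (continuousOn_id.sub continuousOn_const)
  intro z hz
  show id z - w ≠ 0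
  rw [sub_ne_zero]
  intro e
  rw [mem_sphere_zero_iff_norm] at hz
  exact hw (e ▸ hz)

private lemma circleInt_helper (Cst w : ℂ) (k : ℕ) (hw : ‖w‖ ≠ 1) :
    CircleIntegrable (fun z => Cst * ((z - w) ^ k)⁻¹) 0 1 := by
  apply ContinuousOn.circleIntegrable zero_le_one
  apply continuousOn_const.mul
  apply ContinuousOn.inv₀ ((continuousOn_id.sub continuousOn_const).pow _)
  intro z hz
  apply pow_ne_zero
  show id z - w ≠ 0
  rw [sub_ne_zero]
  intro e
  rw [mem_sphere_zero_iff_norm] at hz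
  exact hw (e ▸ hz)

private lemma circleInt_outside (w : ℂ) (hw : 1 < ‖w‖) :
    (∮ z in C((0:ℂ), 1), (z - w)⁻¹) = 0 := by
  apply Complex.circleIntegral_eq_zero_of_differentiable_on_off_countable zero_le_one
    Set.countable_empty
  · apply ContinuousOn.inv₀ (continuousOn_id.sub continuousOn_const)
    intro z hz
    show id z - w ≠ 0
    rw [sub_ne_zero]
    intro e
    simp only [id] at e
    rw [← e] at hw
    rw [mem_closedBall_zero_iff] at hz
    linarith
  · intro z hz
    apply DifferentiableAt.inv (differentiableAt_id.sub_const _)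
    rw [sub_ne_zero]
    intro e
    rw [← e] at hw
    have := mem_ball_zero_iff.mp hz.1
    linarith

private lemma circleInt_pow_zero (k : ℕ) (hk : 2 ≤ k) (w : ℂ) :
    (∮ z in C((0:ℂ),1), ((z - w)^k)⁻¹) = 0 := by
  have : (fun z : ℂ => ((z - w)^k)⁻¹) = fun z => (z - w)^(-(k:ℤ)) := by
    funext z; rw [zpow_neg, ← zpow_natCast]
  rw [this, circleIntegral.integral_sub_zpow_of_ne]
  intro e
  have : (k:ℤ) = 1 := by omega
  omega

private lemma circleIntegral_add' {f g : ℂ → ℂ} (hf : CircleIntegrable f 0 1)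
    (hg : CircleIntegrable g 0 1) :
    (∮ z in C((0:ℂ), 1), (f z + g z))
      = (∮ z in C((0:ℂ), 1), f z) + ∮ z in C((0:ℂ), 1), g z := by
  simp only [circleIntegral, smul_add, intervalIntegral.integral_add hf.out hg.out]

private lemma clean_form (Y b H R ξ : ℂ)
    (hξ : ξ ≠ 0) (hR : R ≠ 0) (hb : b ≠ 0)
    (h1 : ξ - 1/R ≠ 0) (h2 : ξ + 1/R ≠ 0) (h3 : ξ + H/(b*R) ≠ 0)
    (h5 : b + H*R*ξ ≠ 0) (h5' : b*R*ξ + H ≠ 0) :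
    (Y * b * ((1 + H*R*ξ) * (1 + H/(R*ξ)) - (b-1)^2)^2 / ((b + H*R*ξ) * (b + H/(R*ξ)))^2)
      * (1/(ξ - 1/R) + 1/(ξ + 1/R) - 2/(ξ + H/(b*R)))
    = 2*Y*b*R*((1 + H*R*ξ)*(R*ξ + H) - (b-1)^2*(R*ξ))^2
        / ((b + H*R*ξ) * (b*R*ξ + H)^3 * (R*ξ - 1) * (R*ξ + 1)) := by
  have hRξ : R * ξ ≠ 0 := mul_ne_zero hR hξ
  have e3 : ξ - 1/R = (R*ξ - 1)/R := by field_simp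
  have e4 : ξ + 1/R = (R*ξ + 1)/R := by field_simp
  have e5 : ξ + H/(b*R) = (b*R*ξ + H)/(b*R) := by field_simp
  have h31 : R*ξ - 1 ≠ 0 := fun e => h1 (by rw [e3, e]; simp)
  have h32 : R*ξ + 1 ≠ 0 := fun e => h2 (by rw [e4, e]; simp)
  have eA : (1 + H*R*ξ) * (1 + H/(R*ξ)) - (b-1)^2
      = ((1 + H*R*ξ)*(R*ξ + H) - (b-1)^2*(R*ξ))/(R*ξ) := by
    rw [add_div' _ _ _ hRξ, mul_div_assoc', div_sub' hRξ]
    exact congrArg (fun t => t/(R*ξ)) (by ring)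
  have eB : (b + H*R*ξ) * (b + H/(R*ξ)) = ((b + H*R*ξ)*(b*R*ξ + H))/(R*ξ) := by
    rw [add_div' _ _ _ hRξ, mul_div_assoc']
    exact congrArg (fun t => t/(R*ξ)) (by ring)
  rw [eA, eB, e3, e4, e5, div_pow, div_pow, mul_div_assoc', div_div_div_cancel_right₀]
  · rw [one_div, one_div, inv_div, inv_div, div_div_eq_mul_div]
    rw [div_add_div _ _ h31 h32, div_sub_div _ _ (mul_ne_zero h31 h32) h5']
    rw [div_mul_div_comm, div_eq_div_iff]
    · ring
    · exact mul_ne_zero (pow_ne_zero 2 (mul_ne_zero h5 h5'))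
        (mul_ne_zero (mul_ne_zero h31 h32) h5')
    · exact mul_ne_zero (mul_ne_zero (mul_ne_zero h5 (pow_ne_zero 3 h5')) h31) h32
  · exact pow_ne_zero 2 hRξ

private lemma pf_decomp (Y b H R ξ : ℂ)
    (hξ : ξ ≠ 0) (hR : R ≠ 0) (hb : b ≠ 0) (hH : H ≠ 0)
    (h1 : ξ - 1/R ≠ 0) (h2 : ξ + 1/R ≠ 0) (h3 : ξ + H/(b*R) ≠ 0) (h4 : ξ + b/(H*R) ≠ 0)
    (h5 : b + H*R*ξ ≠ 0) (h5' : b*R*ξ + H ≠ 0)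
    (h7 : b + H ≠ 0) (h8 : b - H ≠ 0) :
    2*Y*b*R*((1 + H*R*ξ)*(R*ξ + H) - (b-1)^2*(R*ξ))^2
        / ((b + H*R*ξ) * (b*R*ξ + H)^3 * (R*ξ - 1) * (R*ξ + 1))
    = (Y*b*((1+H)^2-(b-1)^2)^2/(b+H)^4) * (ξ - 1/R)⁻¹
      + (Y*b*((1-H)^2-(b-1)^2)^2/(b-H)^4) * (ξ + 1/R)⁻¹
      + (2*Y*b*(4*b^3 - b^4 - 4*b^2 - 5*H^2*b^2 + 10*H^2*b - 3*H^2 - H^4)/((b^2-H^2)^2)) * (ξ + H/(b*R))⁻¹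
      + (2*Y*H*(2*b^4 - 6*b^3 + 4*b^2 + H^2*b^2 - H^2)/(R*b^2*(b^2-H^2))) * ((ξ + H/(b*R))^2)⁻¹
      + (-2*Y*H^2*(b-1)^2/(R^2*b^3)) * ((ξ + H/(b*R))^3)⁻¹
      + (-2*Y*H^2*b*(b-1)^2/((b^2-H^2)^2)) * (ξ + b/(H*R))⁻¹ := by
  have h9 : b^2 - H^2 ≠ 0 := by
    intro e
    rcases mul_eq_zero.mp (show (b+H)*(b-H) = 0 by linear_combination e) with h | h
    · exact h7 h
    · exact h8 h
  have hRξ : R * ξ ≠ 0 := mul_ne_zero hR hξ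
  have e3 : ξ - 1/R = (R*ξ - 1)/R := by field_simp
  have e4 : ξ + 1/R = (R*ξ + 1)/R := by field_simp
  have e5 : ξ + H/(b*R) = (b*R*ξ + H)/(b*R) := by field_simp
  have e6 : ξ + b/(H*R) = (H*R*ξ + b)/(H*R) := by field_simp
  have h31 : R*ξ - 1 ≠ 0 := fun e => h1 (by rw [e3, e]; simp)
  have h32 : R*ξ + 1 ≠ 0 := fun e => h2 (by rw [e4, e]; simp)
  have h33 : H*R*ξ + b ≠ 0 := fun e => h5 (by linear_combination e)
  rw [e3, e4, e5, e6]
  have d1 : (b+H)^4 * (R*ξ-1) ≠ 0 := mul_ne_zero (pow_ne_zero 4 h7) h31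
  have d2 : (b-H)^4 * (R*ξ+1) ≠ 0 := mul_ne_zero (pow_ne_zero 4 h8) h32
  have d3 : (b^2-H^2)^2 * (b*R*ξ+H) ≠ 0 := mul_ne_zero (pow_ne_zero 2 h9) h5'
  have d4 : (R*b^2*(b^2-H^2)) * (b*R*ξ+H)^2 ≠ 0 :=
    mul_ne_zero (mul_ne_zero (mul_ne_zero hR (pow_ne_zero 2 hb)) h9) (pow_ne_zero 2 h5')
  have d5 : (R^2*b^3) * (b*R*ξ+H)^3 ≠ 0 :=
    mul_ne_zero (mul_ne_zero (pow_ne_zero 2 hR) (pow_ne_zero 3 hb)) (pow_ne_zero 3 h5')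
  have d6 : (b^2-H^2)^2 * (H*R*ξ+b) ≠ 0 := mul_ne_zero (pow_ne_zero 2 h9) h33
  have dL : (b + H*R*ξ) * (b*R*ξ + H)^3 * (R*ξ - 1) * (R*ξ + 1) ≠ 0 :=
    mul_ne_zero (mul_ne_zero (mul_ne_zero h5 (pow_ne_zero 3 h5')) h31) h32
  simp only [div_pow, inv_div, div_mul_div_comm]
  rw [div_add_div _ _ d1 d2]
  rw [div_add_div _ _ (mul_ne_zero d1 d2) d3]
  rw [div_add_div _ _ (mul_ne_zero (mul_ne_zero d1 d2) d3) d4]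
  rw [div_add_div _ _ (mul_ne_zero (mul_ne_zero (mul_ne_zero d1 d2) d3) d4) d5]
  rw [div_add_div _ _ (mul_ne_zero (mul_ne_zero (mul_ne_zero (mul_ne_zero d1 d2) d3) d4) d5) d6]
  rw [div_eq_div_iff dL (mul_ne_zero (mul_ne_zero (mul_ne_zero (mul_ne_zero (mul_ne_zero d1 d2) d3) d4) d5) d6)]
  ring

private lemma value_id (Y b H : ℂ) (hsq : H^2 = Y + b - Y*b)
    (h7 : b + H ≠ 0) (h8 : b - H ≠ 0) (h10 : Y + b ≠ 0) :
    Y*b*((1+H)^2-(b-1)^2)^2/(b+H)^4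
      + Y*b*((1-H)^2-(b-1)^2)^2/(b-H)^4
      + 2*Y*b*(4*b^3 - b^4 - 4*b^2 - 5*H^2*b^2 + 10*H^2*b - 3*H^2 - H^4)/((b^2-H^2)^2)
    = 2*(Y*b*H^2/(Y+b)^2) := by
  have h9 : b^2 - H^2 ≠ 0 := by
    intro e
    rcases mul_eq_zero.mp (show (b+H)*(b-H) = 0 by linear_combination e) with h | h
    · exact h7 h
    · exact h8 h
  rw [div_add_div _ _ (pow_ne_zero 4 h7) (pow_ne_zero 4 h8)]
  rw [div_add_div _ _ (mul_ne_zero (pow_ne_zero 4 h7) (pow_ne_zero 4 h8)) (pow_ne_zero 2 h9)]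
  rw [mul_div_assoc']
  rw [div_eq_div_iff (mul_ne_zero (mul_ne_zero (pow_ne_zero 4 h7) (pow_ne_zero 4 h8)) (pow_ne_zero 2 h9)) (pow_ne_zero 2 h10)]
  linear_combination (Y*(-2*H^2*b^10 + 4*H^2*b^11 + 8*H^4*b^8 - 18*H^4*b^9 - 12*H^6*b^6
    + 32*H^6*b^7 + 8*H^8*b^4 - 28*H^8*b^5 - 2*H^10*b^2 + 12*H^10*b^3 - 2*H^12*b)
    + Y^2*(-2*H^2*b^9 + 2*H^2*b^10 + 8*H^4*b^7 - 8*H^4*b^8 - 12*H^6*b^5 + 12*H^6*b^6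
    + 8*H^8*b^3 - 8*H^8*b^4 - 2*H^10*b + 2*H^10*b^2)) * hsq

theorem stmt16 (y1 y2 h : ℝ) (hy1 : 1 < y1) (hy2 : 1 < y2)
    (hpos : 0 < y1 + y2 - y1 * y2) (hh : h = Real.sqrt (y1 + y2 - y1 * y2)) :
    Tendsto (fun r : ℝ =>
      (1 / (4 * (Real.pi : ℂ) * Complex.I)) *
        ∮ ξ in C((0 : ℂ), 1),
          ((y1 : ℂ) * (y2 : ℂ) *
            ((1 + (h : ℂ) * (r : ℂ) * ξ) * (1 + (h : ℂ) / ((r : ℂ) * ξ)) -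
              ((y2 - 1 : ℝ) : ℂ) ^ 2) ^ 2 /
            (((y2 : ℂ) + (h : ℂ) * (r : ℂ) * ξ) * ((y2 : ℂ) + (h : ℂ) / ((r : ℂ) * ξ))) ^ 2) *
          (1 / (ξ - 1 / (r : ℂ)) + 1 / (ξ + 1 / (r : ℂ)) -
            2 / (ξ + (h : ℂ) / ((y2 : ℂ) * (r : ℂ)))))
      (nhdsWithin 1 (Set.Ioi 1))
      (nhds ((y1 * y2 * h ^ 2 / (y1 + y2) ^ 2 : ℝ) : ℂ)) := by
  have h0 : 0 < h := by rw [hh]; exact Real.sqrt_pos.mpr hpos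
  have hsqr : h^2 = y1 + y2 - y1*y2 := by rw [hh, sq]; exact Real.mul_self_sqrt hpos.le
  have h1 : h < 1 := by nlinarith
  have hhy2 : h < y2 := h1.trans hy2
  have hdiv : 1 < y2 / h := (lt_div_iff₀ h0).mpr (by nlinarith)
  -- the key pointwise value
  set Y : ℂ := (y1 : ℂ)
  set b : ℂ := (y2 : ℂ)
  set H : ℂ := (h : ℂ)
  have hbne : b ≠ 0 := by
    simp only [b, ne_eq, Complex.ofReal_eq_zero]; linarith
  have hHne : H ≠ 0 := by
    simp only [H, ne_eq, Complex.ofReal_eq_zero]; linarith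
  have h7 : b + H ≠ 0 := by
    have : b + H = ((y2 + h : ℝ) : ℂ) := by push_cast; ring
    rw [this]; simp only [ne_eq, Complex.ofReal_eq_zero]; linarith
  have h8 : b - H ≠ 0 := by
    have : b - H = ((y2 - h : ℝ) : ℂ) := by push_cast; ring
    rw [this]; simp only [ne_eq, Complex.ofReal_eq_zero]; linarith
  have h10 : Y + b ≠ 0 := by
    have : Y + b = ((y1 + y2 : ℝ) : ℂ) := by push_cast; ring
    rw [this]; simp only [ne_eq, Complex.ofReal_eq_zero]; linarith
  have hsqC : H^2 = Y + b - Y*b := by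
    have := hsqr
    simp only [Y, b, H]
    push_cast
    exact_mod_cast congrArg (Complex.ofReal) this
  have hval := value_id Y b H hsqC h7 h8 h10
  have hπ : (Real.pi : ℂ) ≠ 0 := by
    simp only [ne_eq, Complex.ofReal_eq_zero]; exact Real.pi_ne_zero
  have hTcast : ((y1 * y2 * h ^ 2 / (y1 + y2) ^ 2 : ℝ) : ℂ) = Y*b*H^2/(Y+b)^2 := by
    simp only [Y, b, H]; push_cast; ring
  -- eventual equality
  have hev : ∀ r : ℝ, r ∈ Set.Ioo (1:ℝ) (y2/h) →
      (1 / (4 * (Real.pi : ℂ) * Complex.I)) *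
        (∮ ξ in C((0 : ℂ), 1),
          ((y1 : ℂ) * (y2 : ℂ) *
            ((1 + (h : ℂ) * (r : ℂ) * ξ) * (1 + (h : ℂ) / ((r : ℂ) * ξ)) -
              ((y2 - 1 : ℝ) : ℂ) ^ 2) ^ 2 /
            (((y2 : ℂ) + (h : ℂ) * (r : ℂ) * ξ) * ((y2 : ℂ) + (h : ℂ) / ((r : ℂ) * ξ))) ^ 2) *
          (1 / (ξ - 1 / (r : ℂ)) + 1 / (ξ + 1 / (r : ℂ)) -
            2 / (ξ + (h : ℂ) / ((y2 : ℂ) * (r : ℂ)))))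
      = ((y1 * y2 * h ^ 2 / (y1 + y2) ^ 2 : ℝ) : ℂ) := by
    intro r hr
    obtain ⟨hr1, hr2⟩ := hr
    have hr0 : (0:ℝ) < r := lt_trans one_pos hr1
    have hrb : h * r < y2 := by
      have := (lt_div_iff₀ h0).mp hr2; linarith [mul_comm r h]
    set R : ℂ := (r : ℂ) with hRdef
    have hRne : R ≠ 0 := by
      simp only [R, ne_eq, Complex.ofReal_eq_zero]; linarith
    -- constants
    set C1 : ℂ := Y*b*((1+H)^2-(b-1)^2)^2/(b+H)^4 with hC1
    set C2 : ℂ := Y*b*((1-H)^2-(b-1)^2)^2/(b-H)^4 with hC2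
    set A1 : ℂ := 2*Y*b*(4*b^3 - b^4 - 4*b^2 - 5*H^2*b^2 + 10*H^2*b - 3*H^2 - H^4)/((b^2-H^2)^2) with hA1
    set A2 : ℂ := 2*Y*H*(2*b^4 - 6*b^3 + 4*b^2 + H^2*b^2 - H^2)/(R*b^2*(b^2-H^2)) with hA2
    set A3 : ℂ := -2*Y*H^2*(b-1)^2/(R^2*b^3) with hA3
    set B1 : ℂ := -2*Y*H^2*b*(b-1)^2/((b^2-H^2)^2) with hB1
    -- norms of pole locations
    have hn1 : ‖(1/R : ℂ)‖ = 1/r := by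
      rw [norm_div, norm_one]
      simp only [R, Complex.norm_real, Real.norm_eq_abs, abs_of_pos hr0]
    have hn3 : ‖(H/(b*R) : ℂ)‖ = h/(y2*r) := by
      rw [norm_div, norm_mul]
      simp only [H, b, R, Complex.norm_real, Real.norm_eq_abs,
        abs_of_pos h0, abs_of_pos (lt_trans one_pos hy2), abs_of_pos hr0]
    have hn4 : ‖(b/(H*R) : ℂ)‖ = y2/(h*r) := by
      rw [norm_div, norm_mul]
      simp only [H, b, R, Complex.norm_real, Real.norm_eq_abs,
        abs_of_pos h0, abs_of_pos (lt_trans one_pos hy2), abs_of_pos hr0]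
    have hlt1 : 1/r < 1 := by rw [div_lt_one hr0]; exact hr1
    have hlt3 : h/(y2*r) < 1 := by
      rw [div_lt_one (by positivity)]
      nlinarith
    have hgt4 : 1 < y2/(h*r) := by
      rw [lt_div_iff₀ (by positivity)]; linarith
    -- EqOn
    have hEq : Set.EqOn
        (fun ξ : ℂ =>
          ((y1 : ℂ) * (y2 : ℂ) *
            ((1 + (h : ℂ) * (r : ℂ) * ξ) * (1 + (h : ℂ) / ((r : ℂ) * ξ)) -
              ((y2 - 1 : ℝ) : ℂ) ^ 2) ^ 2 /
            (((y2 : ℂ) + (h : ℂ) * (r : ℂ) * ξ) * ((y2 : ℂ) + (h : ℂ) / ((r : ℂ) * ξ))) ^ 2) *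
          (1 / (ξ - 1 / (r : ℂ)) + 1 / (ξ + 1 / (r : ℂ)) -
            2 / (ξ + (h : ℂ) / ((y2 : ℂ) * (r : ℂ)))))
        (fun ξ : ℂ =>
          C1 * (ξ - 1/R)⁻¹ + C2 * (ξ + 1/R)⁻¹ + A1 * (ξ + H/(b*R))⁻¹
          + A2 * ((ξ + H/(b*R))^2)⁻¹ + A3 * ((ξ + H/(b*R))^3)⁻¹ + B1 * (ξ + b/(H*R))⁻¹)
        (sphere (0:ℂ) 1) := by
      intro ξ hξs
      have hξn : ‖ξ‖ = 1 := mem_sphere_zero_iff_norm.mp hξs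
      have hξ0 : ξ ≠ 0 := by
        intro e; rw [e, norm_zero] at hξn; norm_num at hξn
      have hd1 : ξ - 1/R ≠ 0 := by
        rw [sub_ne_zero]; intro e
        rw [e, hn1] at hξn; rw [hξn] at hlt1; exact lt_irrefl _ hlt1
      have hd2 : ξ + 1/R ≠ 0 := by
        intro e
        have : ξ = -(1/R) := by linear_combination e
        rw [this, norm_neg, hn1] at hξn; rw [hξn] at hlt1; exact lt_irrefl _ hlt1
      have hd3 : ξ + H/(b*R) ≠ 0 := by
        intro e
        have : ξ = -(H/(b*R)) := by linear_combination e
        rw [this, norm_neg, hn3] at hξn; rw [hξn] at hlt3; exact lt_irrefl _ hlt3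
      have hd4 : ξ + b/(H*R) ≠ 0 := by
        intro e
        have : ξ = -(b/(H*R)) := by linear_combination e
        rw [this, norm_neg, hn4] at hξn; rw [← hξn] at hgt4; exact lt_irrefl _ hgt4
      have hnHRξ : ‖H*R*ξ‖ = h*r := by
        rw [norm_mul, norm_mul, hξn, mul_one]
        simp only [H, R, Complex.norm_real, Real.norm_eq_abs, abs_of_pos h0, abs_of_pos hr0]
      have hnb : ‖b‖ = y2 := by
        simp only [b, Complex.norm_real, Real.norm_eq_abs, abs_of_pos (lt_trans one_pos hy2)]
      have hnbRξ : ‖b*R*ξ‖ = y2*r := by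
        rw [norm_mul, norm_mul, hξn, mul_one]
        simp only [b, R, Complex.norm_real, Real.norm_eq_abs,
          abs_of_pos (lt_trans one_pos hy2), abs_of_pos hr0]
      have hnH : ‖H‖ = h := by
        simp only [H, Complex.norm_real, Real.norm_eq_abs, abs_of_pos h0]
      have hd5 : b + H*R*ξ ≠ 0 := by
        apply add_ne_zero_of_norm_lt'
        rw [hnHRξ, hnb]; exact hrb
      have hd5' : b*R*ξ + H ≠ 0 := by
        apply add_ne_zero_of_norm_lt'
        rw [hnbRξ, hnH]; nlinarith
      have hcast : ((y2 - 1 : ℝ) : ℂ) = b - 1 := by simp only [b]; push_cast; ring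
      have hbr : (h : ℂ) / ((y2:ℂ) * (r:ℂ)) = H/(b*R) := rfl
      simp only [hcast, hbr]
      calc (Y * b * ((1 + H*R*ξ) * (1 + H/(R*ξ)) - (b-1)^2)^2
            / ((b + H*R*ξ) * (b + H/(R*ξ)))^2)
          * (1/(ξ - 1/R) + 1/(ξ + 1/R) - 2/(ξ + H/(b*R)))
          = 2*Y*b*R*((1 + H*R*ξ)*(R*ξ + H) - (b-1)^2*(R*ξ))^2
              / ((b + H*R*ξ) * (b*R*ξ + H)^3 * (R*ξ - 1) * (R*ξ + 1)) :=
            clean_form Y b H R ξ hξ0 hRne hbne hd1 hd2 hd3 hd5 hd5'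
        _ = _ := by
            rw [pf_decomp Y b H R ξ hξ0 hRne hbne hHne hd1 hd2 hd3 hd4 hd5 hd5' h7 h8]
    rw [circleIntegral.integral_congr zero_le_one hEq]
    -- integrability of the six pieces
    have hw1s : ‖(1/R : ℂ)‖ ≠ 1 := by rw [hn1]; linarith
    have hw3s : ‖(H/(b*R) : ℂ)‖ ≠ 1 := by rw [hn3]; linarith
    have hw4s : ‖(b/(H*R) : ℂ)‖ ≠ 1 := by rw [hn4]; linarith
    have hm1 : ∀ c : ℂ, CircleIntegrable (fun ξ : ℂ => c * (ξ - 1/R)⁻¹) 0 1 :=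
      fun c => circleInt_helper1 c _ hw1s
    have hsub2 : ∀ w : ℂ, ‖w‖ ≠ 1 → ∀ c : ℂ, ∀ k : ℕ,
        CircleIntegrable (fun ξ : ℂ => c * ((ξ + w)^k)⁻¹) 0 1 := by
      intro w hw c k
      have : (fun ξ : ℂ => c * ((ξ + w)^k)⁻¹) = fun ξ : ℂ => c * ((ξ - (-w))^k)⁻¹ := by
        funext ξ; rw [sub_neg_eq_add]
      rw [this]
      exact circleInt_helper c (-w) k (by rwa [norm_neg])
    have hm2 : CircleIntegrable (fun ξ : ℂ => C2 * (ξ + 1/R)⁻¹) 0 1 := by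
      have := hsub2 (1/R) hw1s C2 1
      simpa only [pow_one] using this
    have hm3 : CircleIntegrable (fun ξ : ℂ => A1 * (ξ + H/(b*R))⁻¹) 0 1 := by
      have := hsub2 (H/(b*R)) hw3s A1 1
      simpa only [pow_one] using this
    have hm4 : CircleIntegrable (fun ξ : ℂ => A2 * ((ξ + H/(b*R))^2)⁻¹) 0 1 :=
      hsub2 (H/(b*R)) hw3s A2 2
    have hm5 : CircleIntegrable (fun ξ : ℂ => A3 * ((ξ + H/(b*R))^3)⁻¹) 0 1 :=
      hsub2 (H/(b*R)) hw3s A3 3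
    have hm6 : CircleIntegrable (fun ξ : ℂ => B1 * (ξ + b/(H*R))⁻¹) 0 1 := by
      have := hsub2 (b/(H*R)) hw4s B1 1
      simpa only [pow_one] using this
    -- values
    have twoπI := circleIntegral.integral_sub_inv_of_mem_ball
      (show (1/R : ℂ) ∈ ball (0:ℂ) 1 by rwa [mem_ball_zero_iff, hn1])
    have v1 : (∮ ξ in C((0:ℂ),1), C1 * (ξ - 1/R)⁻¹) = C1 * (2*Real.pi*Complex.I) := by
      rw [circleIntegral.integral_const_mul, twoπI]
    have v2 : (∮ ξ in C((0:ℂ),1), C2 * (ξ + 1/R)⁻¹) = C2 * (2*Real.pi*Complex.I) := by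
      have e : (fun ξ : ℂ => C2 * (ξ + 1/R)⁻¹) = fun ξ : ℂ => C2 * (ξ - (-(1/R)))⁻¹ := by
        funext ξ; rw [sub_neg_eq_add]
      rw [e, circleIntegral.integral_const_mul,
        circleIntegral.integral_sub_inv_of_mem_ball
          (show (-(1/R) : ℂ) ∈ ball (0:ℂ) 1 by rw [mem_ball_zero_iff, norm_neg, hn1]; exact hlt1)]
    have v3 : (∮ ξ in C((0:ℂ),1), A1 * (ξ + H/(b*R))⁻¹) = A1 * (2*Real.pi*Complex.I) := by
      have e : (fun ξ : ℂ => A1 * (ξ + H/(b*R))⁻¹) = fun ξ : ℂ => A1 * (ξ - (-(H/(b*R))))⁻¹ := by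
        funext ξ; rw [sub_neg_eq_add]
      rw [e, circleIntegral.integral_const_mul,
        circleIntegral.integral_sub_inv_of_mem_ball
          (show (-(H/(b*R)) : ℂ) ∈ ball (0:ℂ) 1 by
            rw [mem_ball_zero_iff, norm_neg, hn3]; exact hlt3)]
    have v4 : (∮ ξ in C((0:ℂ),1), A2 * ((ξ + H/(b*R))^2)⁻¹) = 0 := by
      have e : (fun ξ : ℂ => A2 * ((ξ + H/(b*R))^2)⁻¹)
          = fun ξ : ℂ => A2 * ((ξ - (-(H/(b*R))))^2)⁻¹ := by
        funext ξ; rw [sub_neg_eq_add]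
      rw [e, circleIntegral.integral_const_mul, circleInt_pow_zero 2 le_rfl, mul_zero]
    have v5 : (∮ ξ in C((0:ℂ),1), A3 * ((ξ + H/(b*R))^3)⁻¹) = 0 := by
      have e : (fun ξ : ℂ => A3 * ((ξ + H/(b*R))^3)⁻¹)
          = fun ξ : ℂ => A3 * ((ξ - (-(H/(b*R))))^3)⁻¹ := by
        funext ξ; rw [sub_neg_eq_add]
      rw [e, circleIntegral.integral_const_mul, circleInt_pow_zero 3 (by norm_num), mul_zero]
    have v6 : (∮ ξ in C((0:ℂ),1), B1 * (ξ + b/(H*R))⁻¹) = 0 := by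
      have e : (fun ξ : ℂ => B1 * (ξ + b/(H*R))⁻¹) = fun ξ : ℂ => B1 * (ξ - (-(b/(H*R))))⁻¹ := by
        funext ξ; rw [sub_neg_eq_add]
      rw [e, circleIntegral.integral_const_mul,
        circleInt_outside _ (by rw [norm_neg, hn4]; exact hgt4), mul_zero]
    have twoPI : (2*(Real.pi:ℂ)*Complex.I) = 2*Real.pi*Complex.I := rfl
    have s2 : (∮ ξ in C((0:ℂ),1), (C1 * (ξ - 1/R)⁻¹ + C2 * (ξ + 1/R)⁻¹))
        = C1 * (2*Real.pi*Complex.I) + C2 * (2*Real.pi*Complex.I) := by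
      rw [circleIntegral_add' (f := fun ξ => C1 * (ξ - 1/R)⁻¹)
        (g := fun ξ => C2 * (ξ + 1/R)⁻¹) (hm1 C1) hm2, v1, v2]
    have s3 : (∮ ξ in C((0:ℂ),1),
        (C1 * (ξ - 1/R)⁻¹ + C2 * (ξ + 1/R)⁻¹ + A1 * (ξ + H/(b*R))⁻¹))
        = C1 * (2*Real.pi*Complex.I) + C2 * (2*Real.pi*Complex.I)
          + A1 * (2*Real.pi*Complex.I) := by
      rw [circleIntegral_add' (f := fun ξ => C1 * (ξ - 1/R)⁻¹ + C2 * (ξ + 1/R)⁻¹)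
        (g := fun ξ => A1 * (ξ + H/(b*R))⁻¹) ((hm1 C1).add hm2) hm3, s2, v3]
    have s4 : (∮ ξ in C((0:ℂ),1),
        (C1 * (ξ - 1/R)⁻¹ + C2 * (ξ + 1/R)⁻¹ + A1 * (ξ + H/(b*R))⁻¹
          + A2 * ((ξ + H/(b*R))^2)⁻¹))
        = C1 * (2*Real.pi*Complex.I) + C2 * (2*Real.pi*Complex.I)
          + A1 * (2*Real.pi*Complex.I) := by
      rw [circleIntegral_add'
        (f := fun ξ => C1 * (ξ - 1/R)⁻¹ + C2 * (ξ + 1/R)⁻¹ + A1 * (ξ + H/(b*R))⁻¹)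
        (g := fun ξ => A2 * ((ξ + H/(b*R))^2)⁻¹) (((hm1 C1).add hm2).add hm3) hm4, s3, v4,
        add_zero]
    have s5 : (∮ ξ in C((0:ℂ),1),
        (C1 * (ξ - 1/R)⁻¹ + C2 * (ξ + 1/R)⁻¹ + A1 * (ξ + H/(b*R))⁻¹
          + A2 * ((ξ + H/(b*R))^2)⁻¹ + A3 * ((ξ + H/(b*R))^3)⁻¹))
        = C1 * (2*Real.pi*Complex.I) + C2 * (2*Real.pi*Complex.I)
          + A1 * (2*Real.pi*Complex.I) := by
      rw [circleIntegral_add'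
        (f := fun ξ => C1 * (ξ - 1/R)⁻¹ + C2 * (ξ + 1/R)⁻¹ + A1 * (ξ + H/(b*R))⁻¹
          + A2 * ((ξ + H/(b*R))^2)⁻¹)
        (g := fun ξ => A3 * ((ξ + H/(b*R))^3)⁻¹) ((((hm1 C1).add hm2).add hm3).add hm4) hm5,
        s4, v5, add_zero]
    have hsplit : (∮ ξ in C((0:ℂ),1),
        (C1 * (ξ - 1/R)⁻¹ + C2 * (ξ + 1/R)⁻¹ + A1 * (ξ + H/(b*R))⁻¹
          + A2 * ((ξ + H/(b*R))^2)⁻¹ + A3 * ((ξ + H/(b*R))^3)⁻¹ + B1 * (ξ + b/(H*R))⁻¹))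
        = (C1 + C2 + A1) * (2*Real.pi*Complex.I) := by
      rw [circleIntegral_add'
        (f := fun ξ => C1 * (ξ - 1/R)⁻¹ + C2 * (ξ + 1/R)⁻¹ + A1 * (ξ + H/(b*R))⁻¹
          + A2 * ((ξ + H/(b*R))^2)⁻¹ + A3 * ((ξ + H/(b*R))^3)⁻¹)
        (g := fun ξ => B1 * (ξ + b/(H*R))⁻¹)
        (((((hm1 C1).add hm2).add hm3).add hm4).add hm5) hm6, s5, v6, add_zero]
      ring
    rw [hsplit, hTcast]
    rw [hval]
    have hI : Complex.I ≠ 0 := Complex.I_ne_zero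
    field_simp
    ring
  -- conclude by eventual equality with a constant
  have hmem : Set.Ioo (1:ℝ) (y2/h) ∈ nhdsWithin (1:ℝ) (Set.Ioi 1) :=
    Ioo_mem_nhdsGT_of_mem (left_mem_Ico.mpr hdiv)
  apply Tendsto.congr' _ tendsto_const_nhds
  filter_upwards [hmem] with r hr
  exact (hev r hr).symm
end
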